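/- Let M and N be normal subgroups of a group L, regarded as crossed modules over L via the inclusion homomorphisms and the conjugation action of L, so that the induced mutual actions are by conjugation in L. Then there exists a unique group homomorphism h : M ⊗ N → L such that h(m ⊗ n) = m·n·m⁻¹·n⁻¹ for all m ∈ M, n ∈ N; the image of h is contained in M ∩ N, and it equals the commutator subgroup ⁅M, N⁆ of L. -/
import Mathlib


/-- A crossed module of groups: a homomorphism `μ : M → L` together with an action of `L`
on `M` by automorphisms, such that `μ` is equivariant (with `L` acting on itself by
conjugation) and the Peiffer identity holds. -/
def IsCrossedModule {M L : Type*} [Group M] [Group L]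
    (μ : M →* L) (σ : L →* MulAut M) : Prop :=
  (∀ l m, μ (σ l m) = l * μ m * l⁻¹) ∧ ∀ m m', σ (μ m) m' = m * m' * m⁻¹

/-- The defining relations of the Brown–Loday non-abelian tensor product of two groups `M`
and `N` acting on each other via `actM : M → N → N` and `actN : N → M → M` (and on
themselves by conjugation): `(m * m') ⊗ n = (ᵐm' ⊗ ᵐn) * (m ⊗ n)` and
`m ⊗ (n * n') = (m ⊗ n) * (ⁿm ⊗ ⁿn')`. -/
def tensorRels (M N : Type*) [Group M] [Group N]
    (actM : M → N → N) (actN : N → M → M) : Set (FreeGroup (M × N)) :=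
  (Set.range fun p : M × M × N =>
    FreeGroup.of (p.1 * p.2.1, p.2.2) *
      (FreeGroup.of (p.1 * p.2.1 * p.1⁻¹, actM p.1 p.2.2) * FreeGroup.of (p.1, p.2.2))⁻¹) ∪
  (Set.range fun p : M × N × N =>
    FreeGroup.of (p.1, p.2.1 * p.2.2) *
      (FreeGroup.of (p.1, p.2.1) *
        FreeGroup.of (actN p.2.1 p.1, p.2.1 * p.2.2 * p.2.1⁻¹))⁻¹)

/-- The Brown–Loday non-abelian tensor product `M ⊗ N` of groups `M` and `N` acting on
each other, presented by generators `m ⊗ n` and the tensor relations. -/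
abbrev NATensor (M N : Type*) [Group M] [Group N]
    (actM : M → N → N) (actN : N → M → M) : Type _ :=
  PresentedGroup (tensorRels M N actM actN)

/-- The generator `m ⊗ n` of the non-abelian tensor product. -/
abbrev tensorOf {M N : Type*} [Group M] [Group N]
    {actM : M → N → N} {actN : N → M → M} (m : M) (n : N) :
    NATensor M N actM actN :=
  PresentedGroup.of (m, n)

/-- For normal subgroups `M, N ⊴ L`, regarded as crossed modules over `L` via the
inclusions and conjugation (so that the induced mutual actions are by conjugation in
`L`), there is a unique homomorphism `h : M ⊗ N → L` with
`h(m ⊗ n) = m·n·m⁻¹·n⁻¹`; its image is contained in `M ∩ N` and equals the commutator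
subgroup `⁅M, N⁆`. -/
theorem tensor_of_normal_subgroups
    {L : Type*} [Group L] (M N : Subgroup L) (hM : M.Normal) (hN : N.Normal) :
    (∃! h : NATensor M N
        (fun (m : M) (n : N) => (⟨(m : L) * n * (m : L)⁻¹, hN.conj_mem n n.2 m⟩ : N))
        (fun (n : N) (m : M) => (⟨(n : L) * m * (n : L)⁻¹, hM.conj_mem m m.2 n⟩ : M)) →* L,
      ∀ (m : M) (n : N),
        h (tensorOf m n) = (m : L) * n * (m : L)⁻¹ * (n : L)⁻¹) ∧
    (∀ h : NATensor M N
        (fun (m : M) (n : N) => (⟨(m : L) * n * (m : L)⁻¹, hN.conj_mem n n.2 m⟩ : N))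
        (fun (n : N) (m : M) => (⟨(n : L) * m * (n : L)⁻¹, hM.conj_mem m m.2 n⟩ : M)) →* L,
      (∀ (m : M) (n : N),
          h (tensorOf m n) = (m : L) * n * (m : L)⁻¹ * (n : L)⁻¹) →
        h.range ≤ M ⊓ N ∧ h.range = ⁅M, N⁆) := by
  
  classical
  set actM := fun (m : M) (n : N) => (⟨(m : L) * n * (m : L)⁻¹, hN.conj_mem n n.2 m⟩ : N) with hactM
  set actN := fun (n : N) (m : M) => (⟨(n : L) * m * (n : L)⁻¹, hM.conj_mem m m.2 n⟩ : M) with hactN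
  set f : M × N → L := fun p => (p.1 : L) * p.2 * (p.1 : L)⁻¹ * (p.2 : L)⁻¹ with hf
  have hrel : ∀ r ∈ tensorRels M N actM actN, FreeGroup.lift f r = 1 := by
    rintro r (⟨⟨m, m', n⟩, rfl⟩ | ⟨⟨m, n, n'⟩, rfl⟩) <;>
      · simp only [map_mul, map_inv, FreeGroup.lift_apply_of, hf, hactM, hactN]
        push_cast
        group
  have key : ∀ (h : NATensor M N actM actN →* L),
      (∀ (m : M) (n : N), h (tensorOf m n) = (m : L) * n * (m : L)⁻¹ * (n : L)⁻¹) →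
      h.range ≤ M ⊓ N ∧ h.range = ⁅M, N⁆ := by
    intro h hg
    constructor
    · rintro x ⟨y, rfl⟩
      refine PresentedGroup.generated_by _ ((M ⊓ N).comap h) ?_ y
      rintro ⟨m, n⟩
      have := hg m n
      simp only [Subgroup.mem_comap, Subgroup.mem_inf, this]
      constructor
      · have : (m : L) * ((n : L) * (m : L)⁻¹ * (n : L)⁻¹) ∈ M :=
          M.mul_mem m.2 (by simpa [mul_assoc] using hM.conj_mem _ (M.inv_mem m.2) n)
        simpa [mul_assoc] using this
      · have : ((m : L) * (n : L) * (m : L)⁻¹) * (n : L)⁻¹ ∈ N :=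
          N.mul_mem (hN.conj_mem _ n.2 m) (N.inv_mem n.2)
        simpa [mul_assoc] using this
    · have h1 : h.range = Subgroup.map h ⊤ := h.range_eq_map
      rw [h1, ← PresentedGroup.closure_range_of (tensorRels M N actM actN),
        MonoidHom.map_closure, Subgroup.commutator_def]
      congr 1
      ext x
      constructor
      · rintro ⟨_, ⟨⟨m, n⟩, rfl⟩, rfl⟩
        exact ⟨m, m.2, n, n.2, by simp [commutatorElement_def, hg m n, mul_assoc]⟩
      · rintro ⟨a, ha, b, hb, rfl⟩
        exact ⟨PresentedGroup.of (⟨a, ha⟩, ⟨b, hb⟩), ⟨(⟨a, ha⟩, ⟨b, hb⟩), rfl⟩,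
          by simp [commutatorElement_def, hg ⟨a, ha⟩ ⟨b, hb⟩, mul_assoc]⟩
  refine ⟨⟨PresentedGroup.toGroup hrel, fun m n => PresentedGroup.toGroup.of hrel, ?_⟩, key⟩
  intro g hg
  ext x
  exact PresentedGroup.toGroup.unique hrel g (fun p => hg p.1 p.2)
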